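/- The Apéry numbers A_2(n) = Σ_{k=0}^n C(n,k)² C(n+k,k) satisfy the recurrence n² A_2(n) - (11n² - 11n + 3) A_2(n-1) - (n-1)² A_2(n-2) = 0 for all n ≥ 2, with A_2(0) = 1 and A_2(1) = 3. -/

import Mathlib

open Nat Finset

/-- The Apéry numbers `A₂(n) = Σ_{k=0}^n C(n,k)² C(n+k,k)` associated with `ζ(2)`. -/
def apery2 (n : ℕ) : ℕ :=
  ∑ k ∈ Finset.range (n + 1), (n.choose k) ^ 2 * ((n + k).choose k)

set_option maxHeartbeats 1000000 in
private lemma alg (k j K J M P c1 c2 c3 d1 d2 d3 e1 e2 : ℚ)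
    (hk : 0 ≤ k) (hj : 0 ≤ j)
    (hK : K ≠ 0) (hJ : J ≠ 0) (hM : M ≠ 0) (hP : P ≠ 0)
    (h1 : c1 * ((j+2)*(j+1)*J) * K = (j+k+2)*(j+k+1)*M)
    (h2 : c2 * ((j+1)*J) * K = (j+k+1)*M)
    (h3 : c3 * J * K = M)
    (h4 : d1 * ((j+k+2)*(j+k+1)*M) * K = (j+2*k+2)*(j+2*k+1)*P)
    (h5 : d2 * ((j+k+1)*M) * K = (j+2*k+1)*P)
    (h6 : d3 * M * K = P)
    (h7 : e1 * ((j+1)*J) * ((k+1)*K) = (j+k+2)*(j+k+1)*M)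
    (h8 : e2 * ((j+k+2)*(j+k+1)*M) * ((k+1)*K) = (j+2*k+3)*(j+2*k+2)*(j+2*k+1)*P) :
    (j+k+2)^2 * (c1^2*d1) - (11*(j+k+2)^2-11*(j+k+2)+3) * (c2^2*d2)
      - (j+k+1)^2 * (c3^2*d3)
    = e1^2*e2*(k+1)^3*((k+1)^2+6*(j+k+2)*(k+1)-5*(k+1)+7*(j+k+2)-11*(j+k+2)^2)
        / ((j+k+2)*(j+2*k+3)*(j+2*k+2))
      - c1^2*d1*k^3*(k^2+6*(j+k+2)*k-5*k+7*(j+k+2)-11*(j+k+2)^2)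
        / ((j+k+2)*(j+2*k+2)*(j+2*k+1)) := by
  have hj1 : (j+1) ≠ 0 := by positivity
  have hj2 : (j+2) ≠ 0 := by positivity
  have hk1 : (k+1) ≠ 0 := by positivity
  have hjk1 : (j+k+1) ≠ 0 := by positivity
  have hjk2 : (j+k+2) ≠ 0 := by positivity
  have ha : (j+2*k+1) ≠ 0 := by positivity
  have hb : (j+2*k+2) ≠ 0 := by positivity
  have hc : (j+2*k+3) ≠ 0 := by positivity
  have hc1' : c1 * ((j+2)*(j+1)) = (j+k+2)*(j+k+1)*c3 :=
    mul_right_cancel₀ (mul_ne_zero hJ hK) (by linear_combination h1 - (j+k+2)*(j+k+1)*h3)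
  have hc2' : c2 * (j+1) = (j+k+1)*c3 :=
    mul_right_cancel₀ (mul_ne_zero hJ hK) (by linear_combination h2 - (j+k+1)*h3)
  have hd1' : d1 * ((j+k+2)*(j+k+1)) = (j+2*k+2)*(j+2*k+1)*d3 :=
    mul_right_cancel₀ (mul_ne_zero hM hK) (by linear_combination h4 - (j+2*k+2)*(j+2*k+1)*h6)
  have hd2' : d2 * (j+k+1) = (j+2*k+1)*d3 :=
    mul_right_cancel₀ (mul_ne_zero hM hK) (by linear_combination h5 - (j+2*k+1)*h6)
  have he1' : e1 * ((j+1)*(k+1)) = (j+k+2)*(j+k+1)*c3 :=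
    mul_right_cancel₀ (mul_ne_zero hJ hK) (by linear_combination h7 - (j+k+2)*(j+k+1)*h3)
  have he2' : e2 * ((j+k+2)*(j+k+1)*(k+1)) = (j+2*k+3)*(j+2*k+2)*(j+2*k+1)*d3 :=
    mul_right_cancel₀ (mul_ne_zero hM hK) (by linear_combination h8 - (j+2*k+3)*(j+2*k+2)*(j+2*k+1)*h6)
  have hc1 : c1 = ((j+k+2)*(j+k+1)*c3) / ((j+2)*(j+1)) := by
    rw [eq_div_iff (by positivity)]; linear_combination hc1'
  have hc2 : c2 = ((j+k+1)*c3) / ((j+1)) := by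
    rw [eq_div_iff (by positivity)]; linear_combination hc2'
  have hd1 : d1 = ((j+2*k+2)*(j+2*k+1)*d3) / ((j+k+2)*(j+k+1)) := by
    rw [eq_div_iff (by positivity)]; linear_combination hd1'
  have hd2 : d2 = ((j+2*k+1)*d3) / ((j+k+1)) := by
    rw [eq_div_iff (by positivity)]; linear_combination hd2'
  have he1 : e1 = ((j+k+2)*(j+k+1)*c3) / ((j+1)*(k+1)) := by
    rw [eq_div_iff (by positivity)]; linear_combination he1'
  have he2 : e2 = ((j+2*k+3)*(j+2*k+2)*(j+2*k+1)*d3) / ((j+k+2)*(j+k+1)*(k+1)) := by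
    rw [eq_div_iff (by positivity)]; linear_combination he2'
  rw [hc1, hc2, hd1, hd2, he1, he2]
  field_simp
  ring


private def F2 (n k : ℕ) : ℚ := ((n.choose k : ℕ) : ℚ)^2 * (((n+k).choose k : ℕ) : ℚ)

private def g2 (n k : ℕ) : ℚ :=
  F2 n k * (k:ℚ)^3 * ((k:ℚ)^2 + 6*(n:ℚ)*(k:ℚ) - 5*(k:ℚ) + 7*(n:ℚ) - 11*(n:ℚ)^2)
    / ((n:ℚ)*((n:ℚ)+(k:ℚ))*((n:ℚ)+(k:ℚ)-1))

private lemma fact1 (a : ℕ) : (a+1)! = (a+1) * a ! := Nat.factorial_succ a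

private lemma fact2 (a : ℕ) : (a+2)! = (a+2) * ((a+1) * a !) := by
  rw [show a+2 = (a+1)+1 from rfl, Nat.factorial_succ, Nat.factorial_succ]

private lemma fact3 (a : ℕ) : (a+3)! = (a+3) * ((a+2) * ((a+1) * a !)) := by
  rw [show a+3 = (a+2)+1 from rfl, Nat.factorial_succ, fact2]

set_option maxHeartbeats 1000000 in
private lemma key (m k : ℕ) (hk : k ≤ m + 2) :
    ((m:ℚ)+2)^2 * F2 (m+2) k - (11*((m:ℚ)+2)^2 - 11*((m:ℚ)+2) + 3) * F2 (m+1) k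
      - ((m:ℚ)+1)^2 * F2 m k = g2 (m+2) (k+1) - g2 (m+2) k := by
  rcases Nat.lt_or_ge m k with hlt | hge
  · -- k = m+1 or k = m+2
    rcases (by omega : k = m + 1 ∨ k = m + 2) with rfl | rfl
    · -- k = m + 1
      have hz1 : m.choose (m+1) = 0 := Nat.choose_eq_zero_of_lt (by omega)
      rw [show m+1+1 = m+2 from rfl]
      simp only [F2, g2, hz1, Nat.choose_self, Nat.choose_succ_self_right,
        Nat.cast_zero, Nat.cast_one]
      rw [show m+2+(m+1) = 2*m+3 by omega, show m+1+(m+1) = 2*m+2 by omega,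
        show m+2+(m+2) = 2*m+4 by omega]
      have hsymm : (2*m+3).choose (m+2) = (2*m+3).choose (m+1) := by
        have h := Nat.choose_symm (n := 2*m+3) (k := m+2) (by omega)
        rw [show 2*m+3-(m+2) = m+1 by omega] at h
        exact h.symm
      have hA2 : ((2*m+4).choose (m+2) : ℚ) = 2 * ((2*m+3).choose (m+1) : ℚ) := by
        have h := Nat.choose_succ_succ (2*m+3) (m+1)
        simp only [Nat.succ_eq_add_one] at h
        rw [show 2*m+3+1 = 2*m+4 by omega, show m+1+1 = m+2 by omega, hsymm] at h
        have hq := congrArg (fun x : ℕ => (x : ℚ)) h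
        push_cast at hq
        linear_combination hq
      have hB : ((m:ℚ)+2) * ((2*m+3).choose (m+1) : ℚ)
          = (2*(m:ℚ)+3) * ((2*m+2).choose (m+1) : ℚ) := by
        have h := Nat.add_one_mul_choose_eq (2*m+2) (m+1)
        rw [show 2*m+2+1 = 2*m+3 by omega, show m+1+1 = m+2 by omega, hsymm] at h
        have hq := congrArg (fun x : ℕ => (x : ℚ)) h
        push_cast at hq
        linear_combination -hq
      have hB' : ((2*m+2).choose (m+1) : ℚ)
          = ((m:ℚ)+2) * ((2*m+3).choose (m+1) : ℚ) / (2*(m:ℚ)+3) := by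
        rw [eq_div_iff (by positivity)]
        linear_combination -hB
      push_cast
      rw [hA2, hB']
      have d1 : ((m:ℚ)+2) ≠ 0 := by positivity
      have d2 : ((m:ℚ)+2+((m:ℚ)+1)) ≠ 0 := by positivity
      have d3 : ((m:ℚ)+2+((m:ℚ)+2)) ≠ 0 := by positivity
      have d4 : ((m:ℚ)+2+((m:ℚ)+1)-1) ≠ 0 := by
        rw [show ((m:ℚ)+2+((m:ℚ)+1)-1) = 2*(m:ℚ)+2 by ring]; positivity
      have d5 : ((m:ℚ)+2+((m:ℚ)+2)-1) ≠ 0 := by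
        rw [show ((m:ℚ)+2+((m:ℚ)+2)-1) = 2*(m:ℚ)+3 by ring]; positivity
      rw [show ((m:ℚ)+2+((m:ℚ)+2)-1) = 2*(m:ℚ)+3 by ring, show ((m:ℚ)+2+((m:ℚ)+1)-1) = 2*(m:ℚ)+2 by ring]
      field_simp
      ring
    · -- k = m + 2
      have hz1 : (m+1).choose (m+2) = 0 := Nat.choose_eq_zero_of_lt (by omega)
      have hz2 : m.choose (m+2) = 0 := Nat.choose_eq_zero_of_lt (by omega)
      have hz3 : (m+2).choose (m+2+1) = 0 := Nat.choose_eq_zero_of_lt (by omega)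
      simp only [F2, g2, hz1, hz2, hz3, Nat.choose_self, Nat.cast_zero, Nat.cast_one]
      push_cast
      have d1 : ((m:ℚ)+2) ≠ 0 := by positivity
      have d3 : ((m:ℚ)+2+((m:ℚ)+2)) ≠ 0 := by positivity
      have d5 : ((m:ℚ)+2+((m:ℚ)+2)-1) ≠ 0 := by
        rw [show ((m:ℚ)+2+((m:ℚ)+2)-1) = 2*(m:ℚ)+3 by ring]; positivity
      rw [show ((m:ℚ)+2+((m:ℚ)+2)-1) = 2*(m:ℚ)+3 by ring]
      field_simp
      ring
  · -- k ≤ m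
    obtain ⟨j, rfl⟩ : ∃ j, m = k + j := ⟨m - k, (Nat.add_sub_cancel' hge).symm⟩
    have hK : ((k ! : ℕ) : ℚ) ≠ 0 := Nat.cast_ne_zero.2 (Nat.factorial_ne_zero k)
    have hJ : ((j ! : ℕ) : ℚ) ≠ 0 := Nat.cast_ne_zero.2 (Nat.factorial_ne_zero j)
    have hM : (((k+j)! : ℕ) : ℚ) ≠ 0 := Nat.cast_ne_zero.2 (Nat.factorial_ne_zero _)
    have hP : (((k+j+k)! : ℕ) : ℚ) ≠ 0 := Nat.cast_ne_zero.2 (Nat.factorial_ne_zero _)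
    have h1 : ((k+j+2).choose k : ℚ) * (((j:ℚ)+2)*(((j:ℚ)+1)*(j ! : ℚ))) * (k ! : ℚ)
        = ((j:ℚ)+(k:ℚ)+2)*(((j:ℚ)+(k:ℚ)+1)*((k+j)! : ℚ)) := by
      have h := Nat.add_choose_mul_factorial_mul_factorial (j+2) k
      rw [show j+2+k = k+j+2 by omega] at h
      rw [show (k+j+2)! = (k+j+2)*((k+j+1)*(k+j)!) from by
        rw [show k+j+2 = (k+j)+2 from rfl]; exact fact2 (k+j), fact2 j] at h
      have hq := congrArg (fun x : ℕ => (x : ℚ)) h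
      push_cast at hq
      linear_combination hq
    have h2 : ((k+j+1).choose k : ℚ) * (((j:ℚ)+1)*(j ! : ℚ)) * (k ! : ℚ)
        = ((j:ℚ)+(k:ℚ)+1)*((k+j)! : ℚ) := by
      have h := Nat.add_choose_mul_factorial_mul_factorial (j+1) k
      rw [show j+1+k = k+j+1 by omega] at h
      rw [show (k+j+1)! = (k+j+1)*(k+j)! from fact1 (k+j), fact1 j] at h
      have hq := congrArg (fun x : ℕ => (x : ℚ)) h
      push_cast at hq
      linear_combination hq
    have h3 : ((k+j).choose k : ℚ) * (j ! : ℚ) * (k ! : ℚ) = ((k+j)! : ℚ) := by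
      have h := Nat.add_choose_mul_factorial_mul_factorial j k
      rw [show j+k = k+j by omega] at h
      have hq := congrArg (fun x : ℕ => (x : ℚ)) h
      push_cast at hq
      linear_combination hq
    have h4 : ((k+j+2+k).choose k : ℚ)
          * (((j:ℚ)+(k:ℚ)+2)*(((j:ℚ)+(k:ℚ)+1)*((k+j)! : ℚ))) * (k ! : ℚ)
        = ((j:ℚ)+2*(k:ℚ)+2)*(((j:ℚ)+2*(k:ℚ)+1)*((k+j+k)! : ℚ)) := by
      have h := Nat.add_choose_mul_factorial_mul_factorial (k+j+2) k
      rw [show k+j+2+k = k+j+k+2 by omega] at h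
      rw [show (k+j+k+2)! = (k+j+k+2)*((k+j+k+1)*(k+j+k)!) from fact2 (k+j+k),
        show (k+j+2)! = (k+j+2)*((k+j+1)*(k+j)!) from fact2 (k+j)] at h
      rw [show (k+j+k+2).choose k = (k+j+2+k).choose k from by rw [show k+j+k+2 = k+j+2+k by omega]] at h
      have hq := congrArg (fun x : ℕ => (x : ℚ)) h
      push_cast at hq
      linear_combination hq
    have h5 : ((k+j+1+k).choose k : ℚ) * (((j:ℚ)+(k:ℚ)+1)*((k+j)! : ℚ)) * (k ! : ℚ)
        = ((j:ℚ)+2*(k:ℚ)+1)*((k+j+k)! : ℚ) := by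
      have h := Nat.add_choose_mul_factorial_mul_factorial (k+j+1) k
      rw [show k+j+1+k = k+j+k+1 by omega] at h
      rw [show (k+j+k+1)! = (k+j+k+1)*(k+j+k)! from fact1 (k+j+k),
        show (k+j+1)! = (k+j+1)*(k+j)! from fact1 (k+j)] at h
      rw [show (k+j+k+1).choose k = (k+j+1+k).choose k from by rw [show k+j+k+1 = k+j+1+k by omega]] at h
      have hq := congrArg (fun x : ℕ => (x : ℚ)) h
      push_cast at hq
      linear_combination hq
    have h6 : ((k+j+k).choose k : ℚ) * ((k+j)! : ℚ) * (k ! : ℚ) = ((k+j+k)! : ℚ) := by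
      have h := Nat.add_choose_mul_factorial_mul_factorial (k+j) k
      have hq := congrArg (fun x : ℕ => (x : ℚ)) h
      push_cast at hq
      linear_combination hq
    have h7 : ((k+j+2).choose (k+1) : ℚ) * (((j:ℚ)+1)*(j ! : ℚ)) * (((k:ℚ)+1)*(k ! : ℚ))
        = ((j:ℚ)+(k:ℚ)+2)*(((j:ℚ)+(k:ℚ)+1)*((k+j)! : ℚ)) := by
      have h := Nat.add_choose_mul_factorial_mul_factorial (j+1) (k+1)
      rw [show j+1+(k+1) = k+j+2 by omega] at h
      rw [show (k+j+2)! = (k+j+2)*((k+j+1)*(k+j)!) from fact2 (k+j),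
        fact1 j, fact1 k] at h
      have hq := congrArg (fun x : ℕ => (x : ℚ)) h
      push_cast at hq
      linear_combination hq
    have h8 : ((k+j+2+(k+1)).choose (k+1) : ℚ)
          * (((j:ℚ)+(k:ℚ)+2)*(((j:ℚ)+(k:ℚ)+1)*((k+j)! : ℚ))) * (((k:ℚ)+1)*(k ! : ℚ))
        = ((j:ℚ)+2*(k:ℚ)+3)*(((j:ℚ)+2*(k:ℚ)+2)*(((j:ℚ)+2*(k:ℚ)+1)*((k+j+k)! : ℚ))) := by
      have h := Nat.add_choose_mul_factorial_mul_factorial (k+j+2) (k+1)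
      rw [show k+j+2+(k+1) = k+j+k+3 by omega] at h
      rw [show (k+j+k+3)! = (k+j+k+3)*((k+j+k+2)*((k+j+k+1)*(k+j+k)!)) from fact3 (k+j+k),
        show (k+j+2)! = (k+j+2)*((k+j+1)*(k+j)!) from fact2 (k+j), fact1 k] at h
      rw [show (k+j+k+3).choose (k+1) = (k+j+2+(k+1)).choose (k+1) from by
        rw [show k+j+k+3 = k+j+2+(k+1) by omega]] at h
      have hq := congrArg (fun x : ℕ => (x : ℚ)) h
      push_cast at hq
      linear_combination hq
    have H := alg (k:ℚ) (j:ℚ) (k ! : ℚ) (j ! : ℚ) ((k+j)! : ℚ) ((k+j+k)! : ℚ)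
      ((k+j+2).choose k : ℚ) ((k+j+1).choose k : ℚ) ((k+j).choose k : ℚ)
      ((k+j+2+k).choose k : ℚ) ((k+j+1+k).choose k : ℚ) ((k+j+k).choose k : ℚ)
      ((k+j+2).choose (k+1) : ℚ) ((k+j+2+(k+1)).choose (k+1) : ℚ)
      (by positivity) (by positivity) hK hJ hM hP
      (by linear_combination h1) (by linear_combination h2) (by linear_combination h3)
      (by linear_combination h4) (by linear_combination h5) (by linear_combination h6)
      (by linear_combination h7) (by linear_combination h8)
    simp only [F2, g2]
    push_cast
    linear_combination H

private lemma apery2_cast (N : ℕ) :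
    (apery2 N : ℚ) = ∑ k ∈ Finset.range (N+1), F2 N k := by
  simp only [apery2, F2]
  push_cast
  rfl

/-- `A₂` satisfies `n² A₂(n) - (11n²-11n+3) A₂(n-1) - (n-1)² A₂(n-2) = 0` for
`n ≥ 2`, with `A₂(0) = 1`, `A₂(1) = 3`. -/
theorem stmt_18 :
    (∀ n : ℕ, 2 ≤ n →
        (n : ℤ) ^ 2 * apery2 n - (11 * (n : ℤ) ^ 2 - 11 * n + 3) * apery2 (n - 1) -
          ((n : ℤ) - 1) ^ 2 * apery2 (n - 2) = 0) ∧
      apery2 0 = 1 ∧ apery2 1 = 3 := by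
  refine ⟨?_, by decide, by decide⟩
  intro n hn
  obtain ⟨m, rfl⟩ : ∃ m, n = m + 2 := ⟨n - 2, by omega⟩
  rw [show m+2-1 = m+1 from rfl, show m+2-2 = m from rfl]
  have e1 : (apery2 (m+1) : ℚ) = ∑ k ∈ Finset.range (m+3), F2 (m+1) k := by
    rw [Finset.sum_range_succ, apery2_cast]
    have hz : F2 (m+1) (m+2) = 0 := by
      simp [F2, Nat.choose_eq_zero_of_lt (by omega : m+1 < m+2)]
    rw [hz, add_zero]
  have e2 : (apery2 m : ℚ) = ∑ k ∈ Finset.range (m+3), F2 m k := by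
    rw [Finset.sum_range_succ, Finset.sum_range_succ, apery2_cast]
    have hz1 : F2 m (m+2) = 0 := by
      simp [F2, Nat.choose_eq_zero_of_lt (by omega : m < m+2)]
    have hz2 : F2 m (m+1) = 0 := by
      simp [F2, Nat.choose_eq_zero_of_lt (by omega : m < m+1)]
    rw [hz1, hz2, add_zero, add_zero]
  have tele : ∑ k ∈ Finset.range (m+3), (g2 (m+2) (k+1) - g2 (m+2) k)
      = g2 (m+2) (m+3) - g2 (m+2) 0 := Finset.sum_range_sub (g2 (m+2)) (m+3)
  have hg0 : g2 (m+2) 0 = 0 := by simp [g2]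
  have hgend : g2 (m+2) (m+3) = 0 := by
    have hz : (m+2).choose (m+3) = 0 := Nat.choose_eq_zero_of_lt (by omega)
    simp [g2, F2, hz]
  have main : ((m:ℚ)+2)^2 * (apery2 (m+2):ℚ)
      - (11*((m:ℚ)+2)^2 - 11*((m:ℚ)+2)+3) * (apery2 (m+1):ℚ)
      - ((m:ℚ)+1)^2 * (apery2 m : ℚ) = 0 := by
    rw [apery2_cast (m+2), e1, e2, show m+2+1 = m+3 from rfl]
    rw [Finset.mul_sum, Finset.mul_sum, Finset.mul_sum, ← Finset.sum_sub_distrib,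
      ← Finset.sum_sub_distrib]
    rw [Finset.sum_congr rfl (fun k hk => key m k (by
      simp only [Finset.mem_range] at hk; omega))]
    rw [tele, hg0, hgend]
    ring
  qify
  push_cast
  linear_combination main
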